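/- Let C be a bounded convex subset of ℝ with more than one point, and let f : C → (−∞, ∞] be convex. Then f is infimum-stable if and only if dom f has more than one point. -/

import Mathlib

open Filter Topology

private lemma vconv (u v w : ℝ) (hv : 0 ≤ v) :
    ConvexOn ℝ Set.univ (fun x : ℝ => u + v * |x - w|) := by
  constructor
  · exact convex_univ
  · intro x _ y _ s t hs ht hst
    simp only [smul_eq_mul]
    have h1 : |s * x + t * y - w| ≤ s * |x - w| + t * |y - w| := by
      have heq : s * x + t * y - w = s * (x - w) + t * (y - w) := by
        linear_combination w * hst
      rw [heq]
      calc |s * (x - w) + t * (y - w)| ≤ |s * (x - w)| + |t * (y - w)| := abs_add_le _ _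
        _ = s * |x - w| + t * |y - w| := by
            rw [abs_mul, abs_mul, abs_of_nonneg hs, abs_of_nonneg ht]
    have h2 := mul_le_mul_of_nonneg_left h1 hv
    have hu : s * u + t * u = u := by rw [← add_mul, hst, one_mul]
    nlinarith [h2, hu]

private lemma epiconv (C : Set ℝ) (hC : Convex ℝ C) (g : ℝ → ℝ)
    (hg : ConvexOn ℝ Set.univ g) :
    Convex ℝ {p : ℝ × ℝ | p.1 ∈ C ∧ ((g p.1 : EReal)) ≤ (p.2 : EReal)} := by
  intro p hp q hq s t hs ht hst
  obtain ⟨hp1, hp2⟩ := hp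
  obtain ⟨hq1, hq2⟩ := hq
  rw [EReal.coe_le_coe_iff] at hp2 hq2
  constructor
  · exact hC hp1 hq1 hs ht hst
  · show ((g (s • p + t • q).1 : EReal)) ≤ ((s • p + t • q).2 : EReal)
    rw [EReal.coe_le_coe_iff]
    simp only [Prod.fst_add, Prod.snd_add, Prod.smul_fst, Prod.smul_snd, smul_eq_mul]
    calc g (s * p.1 + t * q.1) ≤ s * g p.1 + t * g q.1 := by
          have := hg.2 (Set.mem_univ p.1) (Set.mem_univ q.1) hs ht hst
          simpa using this
      _ ≤ s * p.2 + t * q.2 := by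
          have := mul_le_mul_of_nonneg_left hp2 hs
          have := mul_le_mul_of_nonneg_left hq2 ht
          linarith

private lemma quadTendsto (c c' c'' : ℝ) (hc : 0 < c) :
    Tendsto (fun n : ℕ => c * n^2 - c' * n - c'') atTop atTop := by
  apply tendsto_atTop_mono' atTop (f₁ := fun n : ℕ => (n : ℝ))
  · filter_upwards [eventually_ge_atTop (⌈(c' + |c''| + 1)/c⌉₊ + 1)] with n hn
    have h1 : (1 : ℕ) ≤ n := le_trans (Nat.le_add_left 1 _) hn
    have h1' : (1 : ℝ) ≤ (n : ℝ) := by exact_mod_cast h1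
    have h2 : ((c' + |c''| + 1)/c) ≤ (n : ℝ) := by
      calc ((c' + |c''| + 1)/c) ≤ (⌈(c' + |c''| + 1)/c⌉₊ : ℝ) := Nat.le_ceil _
        _ ≤ (n : ℝ) := by exact_mod_cast le_trans (Nat.le_succ _) hn
    have h3 : c' + |c''| + 1 ≤ c * n := by
      rw [div_le_iff₀ hc] at h2; linarith [h2]
    nlinarith [mul_le_mul_of_nonneg_right h3 (by positivity : (0:ℝ) ≤ (n:ℝ)),
      le_abs_self c'', abs_nonneg c'']
  · exact tendsto_natCast_atTop_atTop

private lemma coeTendstoTop {g : ℕ → ℝ} (h : Tendsto g atTop atTop) :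
    Tendsto (fun n => ((g n : ℝ) : EReal)) atTop (𝓝 ⊤) := by
  rw [EReal.tendsto_nhds_top_iff_real]
  intro x
  filter_upwards [h.eventually_gt_atTop x] with n hn
  exact_mod_cast hn

private lemma memBetween (C : Set ℝ) (hC : Convex ℝ C) {y c δ : ℝ}
    (hy : y ∈ C) (hc : c ∈ closure C) (hne : y ≠ c) (hδ : 0 < δ) (hδ1 : δ < 1) :
    c + δ * (y - c) ∈ C := by
  have hyc : |y - c| > 0 := abs_pos.mpr (sub_ne_zero.mpr hne)
  obtain ⟨w, hw, hwd⟩ := Metric.mem_closure_iff.mp hc (δ * |y - c|) (by positivity)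
  rw [Real.dist_eq, abs_lt] at hwd
  have := hC.ordConnected.uIcc_subset hw hy
  apply this
  rw [Set.mem_uIcc]
  rcases lt_or_gt_of_ne hne with h | h
  · -- y < c
    have habs : |y - c| = c - y := by rw [abs_of_neg (by linarith : y - c < 0)]; ring
    rw [habs] at hwd
    right
    constructor <;> nlinarith
  · have habs : |y - c| = y - c := abs_of_pos (by linarith)
    rw [habs] at hwd
    left
    constructor <;> nlinarith

private lemma keyLower (C : Set ℝ) (hC : Convex ℝ C) (hCb : Bornology.IsBounded C)
    (f : ℝ → EReal) {a b : ℝ} (ha : a ∈ C) (hb : b ∈ C) (hab : a ≠ b)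
    (hfaT : f a ≠ ⊤) (hfbT : f b ≠ ⊤) (hfaB : f a ≠ ⊥) (hfbB : f b ≠ ⊥)
    {Ir : ℝ} (hI : (⨅ x ∈ C, f x) = (Ir : EReal))
    (F : ℕ → ℝ → EReal)
    (hFc : ∀ n, Convex ℝ {p : ℝ × ℝ | p.1 ∈ C ∧ F n p.1 ≤ (p.2 : EReal)})
    (hFt : ∀ x ∈ C, Tendsto (fun n => F n x) atTop (𝓝 (f x)))
    {ε : ℝ} (hε : 0 < ε) :
    ∀ᶠ n in atTop, ((Ir - ε : ℝ) : EReal) ≤ ⨅ x ∈ C, F n x := by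
  by_contra hcon
  rw [Filter.not_eventually] at hcon
  have hcon' : ∃ᶠ n in atTop, ∃ x, x ∈ C ∧ F n x < ((Ir - ε : ℝ) : EReal) := by
    apply hcon.mono
    intro n hn
    rw [not_le] at hn
    simpa only [iInf_lt_iff, exists_prop] using hn
  obtain ⟨φ, hφ, hφP⟩ := Filter.extraction_of_frequently_atTop hcon'
  choose x hxC hxF using hφP
  obtain ⟨c, hcC, ψ, hψ, hxψ⟩ := tendsto_subseq_of_bounded hCb hxC
  set y := if c = a then b else a with hy
  have hyC : y ∈ C := by rw [hy]; split <;> assumption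
  have hyne : y ≠ c := by
    rw [hy]; split
    · rename_i h; rw [h]; exact Ne.symm hab
    · rename_i h; exact fun hh => h hh.symm
  have hfyT : f y ≠ ⊤ := by rw [hy]; split <;> assumption
  have hfyB : f y ≠ ⊥ := by rw [hy]; split <;> assumption
  set sy := (f y).toReal + 1 with hsy
  have hfy : f y = ((sy - 1 : ℝ) : EReal) := by
    rw [hsy]; simp only [add_sub_cancel_right]; exact (EReal.coe_toReal hfyT hfyB).symm
  set B := max (sy - (Ir - ε)) 1 with hBdef
  have hB : (0:ℝ) < B := lt_of_lt_of_le one_pos (le_max_right _ _)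
  set δ := min (ε / (4 * B)) (1/4) with hδdef
  have hδ0 : 0 < δ := lt_min (by positivity) (by norm_num)
  have hδ4 : δ ≤ 1/4 := min_le_right _ _
  have hδB : δ ≤ ε / (4 * B) := min_le_left _ _
  set z := c + δ * (y - c) with hz
  have hzC : z ∈ C := memBetween C hC hyC hcC hyne hδ0 (by linarith)
  set xk : ℕ → ℝ := x ∘ ψ with hxk
  have hxkC : ∀ k, xk k ∈ C := fun k => hxC (ψ k)
  set t : ℕ → ℝ := fun k => (z - xk k) / (y - xk k) with ht
  have hyc0 : y - c ≠ 0 := sub_ne_zero.mpr hyne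
  have h1 : Tendsto (fun k => z - xk k) atTop (𝓝 (z - c)) := tendsto_const_nhds.sub hxψ
  have h2 : Tendsto (fun k => y - xk k) atTop (𝓝 (y - c)) := tendsto_const_nhds.sub hxψ
  have hδeq : (z - c)/(y - c) = δ := by rw [hz]; field_simp; ring
  have htlim : Tendsto t atTop (𝓝 δ) := hδeq ▸ h1.div h2 hyc0
  have e1 : ∀ᶠ k in atTop, 0 < t k := htlim.eventually_const_lt hδ0
  have e2 : ∀ᶠ k in atTop, t k < 1 := htlim.eventually_lt_const (by linarith)
  have e3 : ∀ᶠ k in atTop, t k ≤ 2*δ :=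
    (htlim.eventually_lt_const (by linarith : δ < 2*δ)).mono fun k hk => le_of_lt hk
  have hfysy : f y < ((sy : ℝ) : EReal) := by
    rw [hfy]; exact_mod_cast (by linarith : sy - 1 < sy)
  have e4 : ∀ᶠ k in atTop, F (φ (ψ k)) y < ((sy : ℝ) : EReal) :=
    ((hφ.comp hψ).tendsto_atTop).eventually ((hFt y hyC).eventually_lt_const hfysy)
  have e5 : ∀ᶠ k in atTop, y - xk k ≠ 0 := h2.eventually (eventually_ne_nhds hyc0)
  have e6 : ∀ᶠ k in atTop, F (φ (ψ k)) z ≤ ((Ir - ε/2 : ℝ) : EReal) := by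
    filter_upwards [e1, e2, e3, e4, e5] with k hk1 hk2 hk3 hk4 hk5
    have hp : ((xk k, Ir - ε) : ℝ × ℝ) ∈
        {p : ℝ × ℝ | p.1 ∈ C ∧ F (φ (ψ k)) p.1 ≤ (p.2 : EReal)} :=
      ⟨hxkC k, le_of_lt (hxF (ψ k))⟩
    have hq : ((y, sy) : ℝ × ℝ) ∈
        {p : ℝ × ℝ | p.1 ∈ C ∧ F (φ (ψ k)) p.1 ≤ (p.2 : EReal)} := ⟨hyC, le_of_lt hk4⟩
    have hmem := hFc (φ (ψ k)) hp hq (by linarith : (0:ℝ) ≤ 1 - t k) (le_of_lt hk1)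
      (by ring)
    simp only [Prod.smul_mk, Prod.mk_add_mk, smul_eq_mul, Set.mem_setOf_eq] at hmem
    obtain ⟨-, hineq⟩ := hmem
    have hmul : t k * (y - xk k) = z - xk k := div_mul_cancel₀ _ hk5
    have hzeq : (1 - t k) * (xk k) + t k * y = z := by linear_combination hmul
    rw [hzeq] at hineq
    refine hineq.trans ?_
    rw [EReal.coe_le_coe_iff]
    have hb1 : t k * (sy - (Ir - ε)) ≤ t k * B :=
      mul_le_mul_of_nonneg_left (le_max_left _ _) (le_of_lt hk1)
    have hb2 : t k * B ≤ 2 * δ * B := mul_le_mul_of_nonneg_right hk3 (le_of_lt hB)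
    have hb3 : 2 * δ * B ≤ ε / 2 := by
      have := mul_le_mul_of_nonneg_right hδB (le_of_lt hB)
      calc 2 * δ * B ≤ 2 * (ε / (4 * B) * B) := by nlinarith
        _ = ε / 2 := by field_simp; ring
    nlinarith
  have hIz : ((Ir : ℝ) : EReal) ≤ f z := hI ▸ iInf₂_le z hzC
  have e7 : ∀ᶠ n in atTop, ((Ir - ε/2 : ℝ) : EReal) < F n z :=
    (hFt z hzC).eventually_const_lt
      (lt_of_lt_of_le (by exact_mod_cast (by linarith : Ir - ε/2 < Ir)) hIz)
  obtain ⟨N, hN⟩ := eventually_atTop.mp e7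
  obtain ⟨K, hK⟩ := eventually_atTop.mp e6
  have h6 := hK (max K N) (le_max_left _ _)
  have h7 := hN (φ (ψ (max K N)))
    (le_trans (le_max_right K N) (le_trans (hψ.le_apply) (hφ.le_apply)))
  exact absurd h6 (not_le.mpr h7)

/-- If `C ⊆ ℝ` is bounded, convex and nontrivial, and `f : C → (−∞,∞]` is
convex never taking the value `−∞`, then `f` is infimum-stable iff its
effective domain has more than one point. -/
theorem stmt_11 (C : Set ℝ) (hC : Convex ℝ C) (hCb : Bornology.IsBounded C)
    (hCnt : C.Nontrivial) (f : ℝ → EReal)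
    (hfbot : ∀ x ∈ C, f x ≠ ⊥)
    (hf : Convex ℝ {p : ℝ × ℝ | p.1 ∈ C ∧ f p.1 ≤ (p.2 : EReal)}) :
    (∀ F : ℕ → ℝ → EReal,
        (∀ n, Convex ℝ {p : ℝ × ℝ | p.1 ∈ C ∧ F n p.1 ≤ (p.2 : EReal)}) →
        (∀ x ∈ C, Filter.Tendsto (fun n => F n x) Filter.atTop (nhds (f x))) →
        Filter.Tendsto (fun n => ⨅ x ∈ C, F n x) Filter.atTop (nhds (⨅ x ∈ C, f x)))
      ↔ {x ∈ C | f x ≠ ⊤}.Nontrivial := by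
  constructor
  · -- stability → nontrivial domain
    intro hstab
    by_contra hnt
    rw [Set.not_nontrivial_iff] at hnt
    obtain ⟨A, hAC, Bp, hBC, hABne⟩ := hCnt
    by_cases hdom : ∃ x ∈ C, f x ≠ ⊤
    · -- dom f = {a0} : singleton case
      obtain ⟨a0, ha0C, ha0T⟩ := hdom
      have hdomeq : ∀ x ∈ C, x ≠ a0 → f x = ⊤ := by
        intro x hx hne
        by_contra hxT
        exact hne (hnt ⟨hx, hxT⟩ ⟨ha0C, ha0T⟩)
      obtain ⟨b0, hb0C, hb0ne⟩ : ∃ b0 ∈ C, b0 ≠ a0 := by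
        rcases eq_or_ne A a0 with h | h
        · exact ⟨Bp, hBC, fun hh => hABne (h ▸ hh ▸ rfl)⟩
        · exact ⟨A, hAC, h⟩
      set d := b0 - a0 with hddef
      have hd : d ≠ 0 := sub_ne_zero.mpr hb0ne
      have hD : (0:ℝ) < |d| := abs_pos.mpr hd
      set r := (f a0).toReal with hrdef
      have hfa0 : f a0 = (r : EReal) := (EReal.coe_toReal ha0T (hfbot a0 ha0C)).symm
      set g : ℕ → ℝ → ℝ :=
        fun n x => r - n + ((n:ℝ)^3/|d|) * |x - (a0 + d/(n:ℝ)^2)| with hgdef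
      set F : ℕ → ℝ → EReal := fun n x => ((g n x : ℝ) : EReal) with hFdef
      have hFc : ∀ n, Convex ℝ {p : ℝ × ℝ | p.1 ∈ C ∧ F n p.1 ≤ (p.2 : EReal)} :=
        fun n => epiconv C hC (g n) (vconv _ _ _ (by positivity))
      have hga0 : ∀ n : ℕ, g n a0 = r := by
        intro n
        rcases Nat.eq_zero_or_pos n with h0 | h1
        · subst h0; simp [hgdef]
        · have hn : (0:ℝ) < (n:ℝ) := by exact_mod_cast h1
          have : |a0 - (a0 + d/(n:ℝ)^2)| = |d|/(n:ℝ)^2 := by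
            rw [show a0 - (a0 + d/(n:ℝ)^2) = -(d/(n:ℝ)^2) by ring, abs_neg, abs_div]
            congr 1
            exact abs_of_pos (by positivity)
          rw [hgdef]
          simp only []
          rw [this]
          field_simp
          ring
      have hFt : ∀ x ∈ C, Filter.Tendsto (fun n => F n x) Filter.atTop (nhds (f x)) := by
        intro x hx
        rcases eq_or_ne x a0 with h | h
        · subst h
          rw [hfa0]
          have : (fun n => F n x) = fun _ => ((r:ℝ) : EReal) := by
            funext n; rw [hFdef]; simp only []; rw [hga0 n]
          rw [this]
          exact tendsto_const_nhds
        · rw [hdomeq x hx h]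
          apply coeTendstoTop
          set c := |x - a0|/|d| with hcdef
          have hX : (0:ℝ) < |x - a0| := abs_pos.mpr (sub_ne_zero.mpr h)
          have hc : (0:ℝ) < c := by positivity
          apply tendsto_atTop_mono' atTop
            (f₁ := fun n : ℕ => c*(n:ℝ)^2 - 2*(n:ℝ) - (-r))
          · filter_upwards [eventually_ge_atTop 1] with n hn
            have hn1 : (1:ℝ) ≤ (n:ℝ) := by exact_mod_cast hn
            have hn0 : (0:ℝ) < (n:ℝ) := by linarith
            set A' := |x - (a0 + d/(n:ℝ)^2)| with hA'
            have htri : |x - a0| ≤ A' + |d|/(n:ℝ)^2 := by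
              have h1 : x - a0 = (x - (a0 + d/(n:ℝ)^2)) + d/(n:ℝ)^2 := by ring
              calc |x - a0| ≤ |x - (a0 + d/(n:ℝ)^2)| + |d/(n:ℝ)^2| := by
                    rw [h1]; exact abs_add_le _ _
                _ = A' + |d|/(n:ℝ)^2 := by
                    rw [abs_div, abs_of_pos (by positivity : (0:ℝ) < (n:ℝ)^2)]
            have hpos : (0:ℝ) ≤ (n:ℝ)^3/|d| := by positivity
            have hmul := mul_le_mul_of_nonneg_left htri hpos
            have hcanc : (n:ℝ)^3/|d| * (|d|/(n:ℝ)^2) = (n:ℝ) := by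
              field_simp
            have hce : (n:ℝ)^3/|d| * |x - a0| = c * (n:ℝ)^3 := by
              rw [hcdef]; ring
            have hmono : c*(n:ℝ)^2 ≤ c*(n:ℝ)^3 := by
              have hkey : (0:ℝ) ≤ c*((n:ℝ)^2)*((n:ℝ)-1) :=
                mul_nonneg (mul_nonneg (le_of_lt hc) (sq_nonneg _)) (by linarith)
              nlinarith [hkey]
            show c*(n:ℝ)^2 - 2*(n:ℝ) - (-r) ≤ g n x
            rw [hgdef]
            simp only []
            nlinarith [hmul, hcanc, hce, hmono]
          · exact quadTendsto c 2 (-r) hc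
      have hstab' := hstab F hFc hFt
      have hinf : (⨅ x ∈ C, f x) = (r : EReal) := by
        rw [← hfa0]
        apply le_antisymm (iInf₂_le a0 ha0C)
        apply le_iInf₂
        intro x hx
        rcases eq_or_ne x a0 with hh | hh
        · subst hh; exact le_refl _
        · rw [hdomeq x hx hh]; exact le_top
      rw [hinf] at hstab'
      have hev := hstab'.eventually (eventually_gt_nhds
        (show ((r - 1 : ℝ) : EReal) < ((r:ℝ):EReal) by
          exact_mod_cast (by linarith : r - 1 < r)))
      obtain ⟨N, hN⟩ := eventually_atTop.mp hev
      set n := max N 1 with hndef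
      have hn1 : 1 ≤ n := le_max_right _ _
      have hn1' : (1:ℝ) ≤ (n:ℝ) := by exact_mod_cast hn1
      have hcn : a0 + d/(n:ℝ)^2 ∈ C := by
        have ht0 : (0:ℝ) < 1/(n:ℝ)^2 := by positivity
        have ht1 : 1/(n:ℝ)^2 ≤ 1 := by
          rw [div_le_one (by positivity)]; nlinarith
        have := hC ha0C hb0C (by linarith : (0:ℝ) ≤ 1 - 1/(n:ℝ)^2) (le_of_lt ht0)
          (by ring)
        simp only [smul_eq_mul] at this
        convert this using 1
        rw [hddef]; field_simp; ring
      have hgcn : g n (a0 + d/(n:ℝ)^2) = r - n := by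
        rw [hgdef]; simp
      have hle : (⨅ x ∈ C, F n x) ≤ ((r - (n:ℝ) : ℝ) : EReal) := by
        calc (⨅ x ∈ C, F n x) ≤ F n (a0 + d/(n:ℝ)^2) :=
              iInf₂_le (f := fun x (_ : x ∈ C) => F n x) (a0 + d/(n:ℝ)^2) hcn
          _ = ((r - (n:ℝ) : ℝ) : EReal) := by
              simp only [hFdef]; rw [hgcn]
      have hcontra := hN n (le_max_left _ _)
      have : ((r - 1 : ℝ) : EReal) < ((r - (n:ℝ) : ℝ) : EReal) :=
        lt_of_lt_of_le hcontra hle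
      rw [EReal.coe_lt_coe_iff] at this
      linarith
    · -- dom f empty
      push_neg at hdom
      set d := Bp - A with hddef
      have hd : d ≠ 0 := sub_ne_zero.mpr (Ne.symm hABne)
      have hD : (0:ℝ) < |d| := abs_pos.mpr hd
      set g : ℕ → ℝ → ℝ :=
        fun n x => -(n:ℝ) + (2*(n:ℝ)^2/|d|) * |x - (A + d/(n:ℝ))| with hgdef
      set F : ℕ → ℝ → EReal := fun n x => ((g n x : ℝ) : EReal) with hFdef
      have hFc : ∀ n, Convex ℝ {p : ℝ × ℝ | p.1 ∈ C ∧ F n p.1 ≤ (p.2 : EReal)} :=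
        fun n => epiconv C hC (g n) (vconv _ _ _ (by positivity))
      have hFt : ∀ x ∈ C, Filter.Tendsto (fun n => F n x) Filter.atTop (nhds (f x)) := by
        intro x hx
        rw [hdom x hx]
        apply coeTendstoTop
        rcases eq_or_ne x A with h | h
        · subst h
          apply tendsto_atTop_mono' atTop (f₁ := fun n : ℕ => (n:ℝ))
          · filter_upwards [eventually_ge_atTop 1] with n hn
            have hn1 : (1:ℝ) ≤ (n:ℝ) := by exact_mod_cast hn
            have hn0 : (0:ℝ) < (n:ℝ) := by linarith
            have habs : |x - (x + d/(n:ℝ))| = |d|/(n:ℝ) := by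
              rw [show x - (x + d/(n:ℝ)) = -(d/(n:ℝ)) by ring, abs_neg, abs_div,
                abs_of_pos hn0]
            show (n:ℝ) ≤ g n x
            rw [hgdef]
            simp only []
            rw [habs]
            have : 2*(n:ℝ)^2/|d| * (|d|/(n:ℝ)) = 2*(n:ℝ) := by field_simp
            rw [this]
            linarith
          · exact tendsto_natCast_atTop_atTop
        · set c := 2*|x - A|/|d| with hcdef
          have hX : (0:ℝ) < |x - A| := abs_pos.mpr (sub_ne_zero.mpr h)
          have hc : (0:ℝ) < c := by positivity
          apply tendsto_atTop_mono' atTop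
            (f₁ := fun n : ℕ => c*(n:ℝ)^2 - 3*(n:ℝ) - 0)
          · filter_upwards [eventually_ge_atTop 1] with n hn
            have hn1 : (1:ℝ) ≤ (n:ℝ) := by exact_mod_cast hn
            have hn0 : (0:ℝ) < (n:ℝ) := by linarith
            set A' := |x - (A + d/(n:ℝ))| with hA'
            have htri : |x - A| ≤ A' + |d|/(n:ℝ) := by
              have h1 : x - A = (x - (A + d/(n:ℝ))) + d/(n:ℝ) := by ring
              calc |x - A| ≤ |x - (A + d/(n:ℝ))| + |d/(n:ℝ)| := by
                    rw [h1]; exact abs_add_le _ _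
                _ = A' + |d|/(n:ℝ) := by rw [abs_div, abs_of_pos hn0]
            have hpos : (0:ℝ) ≤ 2*(n:ℝ)^2/|d| := by positivity
            have hmul := mul_le_mul_of_nonneg_left htri hpos
            have hcanc : 2*(n:ℝ)^2/|d| * (|d|/(n:ℝ)) = 2*(n:ℝ) := by
              field_simp
            have hce : 2*(n:ℝ)^2/|d| * |x - A| = c * (n:ℝ)^2 := by
              rw [hcdef]; ring
            show c*(n:ℝ)^2 - 3*(n:ℝ) - 0 ≤ g n x
            rw [hgdef]
            simp only []
            nlinarith [hmul, hcanc, hce]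
          · exact quadTendsto c 3 0 hc
      have hstab' := hstab F hFc hFt
      have hinf : (⨅ x ∈ C, f x) = (⊤ : EReal) := by
        rw [eq_top_iff]
        exact le_iInf₂ fun x hx => (hdom x hx).ge
      rw [hinf] at hstab'
      have hev := hstab'.eventually (eventually_gt_nhds (EReal.coe_lt_top 0))
      obtain ⟨N, hN⟩ := eventually_atTop.mp hev
      set n := max N 1 with hndef
      have hn1 : 1 ≤ n := le_max_right _ _
      have hn1' : (1:ℝ) ≤ (n:ℝ) := by exact_mod_cast hn1
      have hcn : A + d/(n:ℝ) ∈ C := by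
        have ht0 : (0:ℝ) < 1/(n:ℝ) := by positivity
        have ht1 : 1/(n:ℝ) ≤ 1 := by
          rw [div_le_one (by positivity)]; linarith
        have := hC hAC hBC (by linarith : (0:ℝ) ≤ 1 - 1/(n:ℝ)) (le_of_lt ht0)
          (by ring)
        simp only [smul_eq_mul] at this
        convert this using 1
        rw [hddef]; field_simp; ring
      have hgcn : g n (A + d/(n:ℝ)) = -(n:ℝ) := by
        rw [hgdef]; simp
      have hle : (⨅ x ∈ C, F n x) ≤ ((-(n:ℝ) : ℝ) : EReal) := by
        calc (⨅ x ∈ C, F n x) ≤ F n (A + d/(n:ℝ)) :=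
              iInf₂_le (f := fun x (_ : x ∈ C) => F n x) (A + d/(n:ℝ)) hcn
          _ = ((-(n:ℝ) : ℝ) : EReal) := by
              simp only [hFdef]; rw [hgcn]
      have hcontra := hN n (le_max_left _ _)
      have : ((0:ℝ) : EReal) < ((-(n:ℝ) : ℝ) : EReal) := lt_of_lt_of_le hcontra hle
      rw [EReal.coe_lt_coe_iff] at this
      linarith
  · -- nontrivial domain → stability
    intro hdom F hFc hFt
    obtain ⟨a, ⟨haC, haT⟩, b, ⟨hbC, hbT⟩, hab⟩ := hdom
    have haB := hfbot a haC
    have hbB := hfbot b hbC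
    have hItop : (⨅ x ∈ C, f x) ≠ ⊤ :=
      ne_top_of_le_ne_top haT (iInf₂_le a haC)
    rcases eq_or_ne (⨅ x ∈ C, f x) ⊥ with hIbot | hIbot
    · rw [hIbot]
      rw [EReal.tendsto_nhds_bot_iff_real]
      intro u
      have : (⨅ x ∈ C, f x) < ((u:ℝ):EReal) := hIbot ▸ EReal.bot_lt_coe _
      simp only [iInf_lt_iff] at this
      obtain ⟨y, hyC, hyu⟩ := this
      filter_upwards [(hFt y hyC).eventually_lt_const hyu] with n hn
      exact lt_of_le_of_lt (iInf₂_le y hyC) hn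
    · set Ir := (⨅ x ∈ C, f x).toReal with hIrdef
      have hIr : (⨅ x ∈ C, f x) = ((Ir:ℝ):EReal) :=
        (EReal.coe_toReal hItop hIbot).symm
      rw [hIr]
      rw [tendsto_order]
      constructor
      · intro u hu
        obtain ⟨v, huv, hvI⟩ := EReal.exists_between_coe_real hu
        set ε := Ir - v with hεdef
        have hε : 0 < ε := by
          rw [hεdef]; rw [EReal.coe_lt_coe_iff] at hvI; linarith
        have hIrε : ((Ir - ε : ℝ):EReal) = ((v:ℝ):EReal) := by
          rw [hεdef]; norm_num
        filter_upwards [keyLower C hC hCb f haC hbC hab haT hbT haB hbB hIr F hFc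
          hFt hε] with n hn
        exact lt_of_lt_of_le (hIrε ▸ huv) hn
      · intro u hu
        have : (⨅ x ∈ C, f x) < u := hIr ▸ hu
        simp only [iInf_lt_iff] at this
        obtain ⟨y, hyC, hyu⟩ := this
        filter_upwards [(hFt y hyC).eventually_lt_const hyu] with n hn
        exact lt_of_le_of_lt (iInf₂_le y hyC) hn
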